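/- arXiv:2310.14974 — 2 statements merged into one kernel-verified Lean document; each statement's English description precedes it below -/
import Mathlib

section
/- Let ε be a real number with 0 < ε ≤ 2, let θ be a nonzero real number with |θ| ≤ π, and let n_c be a natural number with (n_c : ℝ) ≥ log₂(|θ| / arccos(1 − ε²/2)) + 1. Then |e^{iθ/2^{n_c − 1}} − 1| ≤ ε. -/
open Complex Real

theorem abs_exp_root_sub_one_le (ε θ : ℝ) (hε : 0 < ε) (hε2 : ε ≤ 2)
    (hθ : θ ≠ 0) (hθπ : |θ| ≤ Real.pi) (n_c : ℕ)
    (hn : (n_c : ℝ) ≥ Real.log (|θ| / Real.arccos (1 - ε ^ 2 / 2)) / Real.log 2 + 1) :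
    ‖Complex.exp ((θ / 2 ^ (n_c - 1) : ℝ) * Complex.I) - 1‖ ≤ ε := by
  set k := n_c - 1 with hk
  set a := Real.arccos (1 - ε ^ 2 / 2) with ha
  have hx1 : (1 - ε ^ 2 / 2) ≤ 1 := by nlinarith
  have hx2 : -1 ≤ 1 - ε ^ 2 / 2 := by nlinarith
  have hapos : 0 < a := Real.arccos_pos.mpr (by nlinarith)
  have hapi : a ≤ Real.pi := Real.arccos_le_pi _
  have hcos : Real.cos a = 1 - ε ^ 2 / 2 := Real.cos_arccos hx2 hx1
  have hθpos : 0 < |θ| := abs_pos.mpr hθ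
  have hkcast : (n_c : ℝ) - 1 ≤ (k : ℝ) := by
    rcases Nat.eq_zero_or_pos n_c with h0 | h1
    · simp [hk, h0]
    · rw [hk, Nat.cast_sub h1]; norm_num
  have hlog2 : (0:ℝ) < Real.log 2 := Real.log_pos (by norm_num)
  have hlog : Real.log (|θ| / a) ≤ (k : ℝ) * Real.log 2 := by
    have h1 : Real.log (|θ| / a) / Real.log 2 ≤ (n_c : ℝ) - 1 := by linarith
    have h2 : Real.log (|θ| / a) / Real.log 2 ≤ (k : ℝ) := le_trans h1 hkcast
    calc Real.log (|θ| / a) = Real.log (|θ| / a) / Real.log 2 * Real.log 2 := by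
          field_simp
      _ ≤ (k : ℝ) * Real.log 2 := by
          exact mul_le_mul_of_nonneg_right h2 hlog2.le
  have h2k : |θ| / a ≤ 2 ^ k := by
    have hpos : 0 < |θ| / a := div_pos hθpos hapos
    have hl : Real.log (|θ| / a) ≤ Real.log ((2:ℝ) ^ k) := by
      rw [Real.log_pow]; exact hlog
    exact (Real.log_le_log_iff hpos (by positivity)).mp hl
  have h2kpos : (0:ℝ) < 2 ^ k := by positivity
  have hφle : |θ| / 2 ^ k ≤ a := by
    rw [div_le_iff₀ hapos] at h2k
    rw [div_le_iff₀ h2kpos]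
    linarith [h2k]
  set φ := θ / 2 ^ k with hφ
  have hφabs : |φ| ≤ a := by
    rw [hφ, abs_div, abs_of_pos h2kpos]
    exact hφle
  have hcosφ : 1 - ε ^ 2 / 2 ≤ Real.cos φ := by
    have h := Real.cos_le_cos_of_nonneg_of_le_pi (abs_nonneg φ) hapi hφabs
    rw [Real.cos_abs] at h
    linarith [hcos ▸ h]
  have hexp : Complex.exp ((φ : ℂ) * Complex.I)
      = (Real.cos φ : ℂ) + (Real.sin φ : ℂ) * Complex.I := by
    rw [Complex.exp_mul_I, Complex.ofReal_cos, Complex.ofReal_sin]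
  rw [Complex.norm_def]
  have hsq : Complex.normSq (Complex.exp ((φ : ℂ) * Complex.I) - 1)
      = 2 - 2 * Real.cos φ := by
    rw [hexp]
    simp [Complex.normSq_apply, Complex.cos_ofReal_re, Complex.sin_ofReal_re]
    nlinarith [Real.sin_sq_add_cos_sq φ]
  rw [hsq]
  calc Real.sqrt (2 - 2 * Real.cos φ) ≤ Real.sqrt (ε ^ 2) :=
        Real.sqrt_le_sqrt (by nlinarith)
    _ = ε := Real.sqrt_sq hε.le
end

section
/- Let W be a 2×2 complex unitary matrix, let d : Fin 2 → ℝ with |d j| ≤ π for each j, let ε be a real number with 0 < ε ≤ 2, and let N be a positive natural number with (N : ℝ) ≥ (max_j |d j|) / arccos(1 − ε²/2). Then the matrix V = W · diagonal(fun j => e^{i·d j / N}) · Wᴴ satisfies ‖V − 1‖ ≤ ε, where ‖·‖ is the L² operator norm on 2×2 complex matrices. -/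
open Complex Real Matrix
open scoped Matrix.Norms.L2Operator

lemma abs_exp_mul_I_sub_one_sq (x : ℝ) :
    ‖Complex.exp ((x : ℂ) * Complex.I) - 1‖ ^ 2 = 2 - 2 * Real.cos x := by
  rw [Complex.exp_mul_I, Complex.sq_norm, Complex.normSq_apply]
  simp only [Complex.add_re, Complex.add_im, Complex.sub_re, Complex.sub_im, Complex.one_re,
    Complex.one_im, Complex.mul_re, Complex.mul_im, Complex.I_re, Complex.I_im,
    Complex.cos_ofReal_re, Complex.cos_ofReal_im, Complex.sin_ofReal_re, Complex.sin_ofReal_im]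
  have := Real.sin_sq_add_cos_sq x
  ring_nf
  nlinarith [Real.sin_sq_add_cos_sq x]

lemma l2_opNorm_diag_le (v : Fin 2 → ℂ) (c : ℝ) (hc : 0 ≤ c)
    (h : ∀ j, ‖v j‖ ≤ c) : ‖Matrix.diagonal v‖ ≤ c := by
  rw [Matrix.l2_opNorm_def]
  apply ContinuousLinearMap.opNorm_le_bound _ hc
  intro x
  have hxnorm : ∀ (y : EuclideanSpace ℂ (Fin 2)), ‖y‖ = Real.sqrt (∑ i, ‖y i‖ ^ 2) := by
    intro y; rw [EuclideanSpace.norm_eq]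
  rw [hxnorm, hxnorm x]
  rw [← Real.sqrt_sq hc, ← Real.sqrt_mul (by positivity)]
  apply Real.sqrt_le_sqrt
  rw [Finset.mul_sum]
  apply Finset.sum_le_sum
  intro i _
  have : (((Matrix.toEuclideanLin ≪≫ₗ LinearMap.toContinuousLinearMap) (Matrix.diagonal v)) x) i = v i * x i := by
    show (Matrix.toEuclideanLin (Matrix.diagonal v) x) i = v i * x i
    rw [Matrix.toEuclideanLin_apply]
    simp [Matrix.mulVec_diagonal]
  rw [this]
  rw [norm_mul, mul_pow]
  have h1 : ‖v i‖ ^ 2 ≤ c ^ 2 := by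
    have hvi : ‖v i‖ ≤ c := by exact h i
    exact sq_le_sq' (by linarith [norm_nonneg (v i)]) hvi
  have h2 : (0:ℝ) ≤ ‖x i‖ ^ 2 := by positivity
  calc ‖v i‖ ^ 2 * ‖x i‖ ^ 2 ≤ c ^ 2 * ‖x i‖ ^ 2 := by
        exact mul_le_mul_of_nonneg_right h1 h2
    _ = c ^ 2 * ‖x i‖ ^ 2 := rfl

lemma norm_one_l2 : ‖(1 : Matrix (Fin 2) (Fin 2) ℂ)‖ = 1 := by
  have h := Matrix.l2_opNorm_conjTranspose_mul_self (1 : Matrix (Fin 2) (Fin 2) ℂ)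
  rw [Matrix.conjTranspose_one, mul_one] at h
  have hne : ‖(1 : Matrix (Fin 2) (Fin 2) ℂ)‖ ≠ 0 := by
    simp only [ne_eq, norm_eq_zero]
    exact one_ne_zero
  have := mul_left_cancel₀ hne (by linarith : ‖(1 : Matrix (Fin 2) (Fin 2) ℂ)‖ * ‖(1 : Matrix (Fin 2) (Fin 2) ℂ)‖ = ‖(1 : Matrix (Fin 2) (Fin 2) ℂ)‖ * 1)
  linarith

lemma norm_unitary {W : Matrix (Fin 2) (Fin 2) ℂ}
    (hW : W ∈ Matrix.unitaryGroup (Fin 2) ℂ) : ‖W‖ = 1 := by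
  have h1 : Wᴴ * W = 1 := hW.1
  have h := Matrix.l2_opNorm_conjTranspose_mul_self W
  rw [h1, norm_one_l2] at h
  nlinarith [norm_nonneg W]

theorem root_close_to_id (W : Matrix (Fin 2) (Fin 2) ℂ)
    (hW : W ∈ Matrix.unitaryGroup (Fin 2) ℂ) (d : Fin 2 → ℝ)
    (hd : ∀ j, |d j| ≤ Real.pi) (ε : ℝ) (hε : 0 < ε) (hε2 : ε ≤ 2)
    (N : ℕ) (hN : 0 < N)
    (hNge : (N : ℝ) ≥ max |d 0| |d 1| / Real.arccos (1 - ε ^ 2 / 2)) :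
    ‖W * Matrix.diagonal (fun j => Complex.exp ((d j / N : ℝ) * Complex.I)) * Wᴴ - 1‖ ≤ ε := by
  set c := Real.arccos (1 - ε ^ 2 / 2) with hc
  have hc_pos : 0 < c := Real.arccos_pos.mpr (by nlinarith)
  have hc_pi : c ≤ Real.pi := Real.arccos_le_pi _
  have hcos : Real.cos c = 1 - ε ^ 2 / 2 := Real.cos_arccos (by nlinarith) (by nlinarith)
  have hWW : W * Wᴴ = 1 := hW.2
  have hNpos : (0:ℝ) < N := by exact_mod_cast hN
  -- rewrite : W D Wᴴ - 1 = W (D - 1) Wᴴ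
  have key : W * Matrix.diagonal (fun j => Complex.exp ((d j / N : ℝ) * Complex.I)) * Wᴴ - 1
      = W * Matrix.diagonal (fun j => Complex.exp ((d j / N : ℝ) * Complex.I) - 1) * Wᴴ := by
    have : Matrix.diagonal (fun j => Complex.exp ((d j / N : ℝ) * Complex.I) - 1)
        = Matrix.diagonal (fun j => Complex.exp ((d j / N : ℝ) * Complex.I)) - 1 := by
      rw [← Matrix.diagonal_one, Matrix.diagonal_sub]
    rw [this, Matrix.mul_sub, Matrix.sub_mul, mul_one, hWW]
  rw [key]
  have hdle : ∀ j : Fin 2, |d j| ≤ (N:ℝ) * c := by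
    intro j
    have hmax : |d j| ≤ max |d 0| |d 1| := by
      fin_cases j
      · exact le_max_left _ _
      · exact le_max_right _ _
    have : max |d 0| |d 1| ≤ (N:ℝ) * c := by
      rw [ge_iff_le, div_le_iff₀ hc_pos] at hNge
      exact hNge
    linarith
  have hdiag : ‖Matrix.diagonal (fun j => Complex.exp ((d j / N : ℝ) * Complex.I) - 1)‖ ≤ ε := by
    apply l2_opNorm_diag_le _ _ hε.le
    intro j
    have hx : |d j / N| ≤ c := by
      rw [abs_div, abs_of_pos hNpos, div_le_iff₀ hNpos]
      linarith [hdle j, mul_comm (N:ℝ) c]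
    have hcosx : Real.cos (d j / N) ≥ 1 - ε ^ 2 / 2 := by
      rw [← hcos, ← Real.cos_abs]
      exact Real.cos_le_cos_of_nonneg_of_le_pi (abs_nonneg _) hc_pi hx
    have hsq := abs_exp_mul_I_sub_one_sq (d j / N)
    have : ‖Complex.exp ((d j / N : ℝ) * Complex.I) - 1‖ ^ 2 ≤ ε ^ 2 := by
      rw [hsq]; nlinarith
    nlinarith [norm_nonneg (Complex.exp ((d j / N : ℝ) * Complex.I) - 1)]
  calc ‖W * Matrix.diagonal (fun j => Complex.exp ((d j / N : ℝ) * Complex.I) - 1) * Wᴴ‖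
      ≤ ‖W * Matrix.diagonal (fun j => Complex.exp ((d j / N : ℝ) * Complex.I) - 1)‖ * ‖Wᴴ‖ :=
        Matrix.l2_opNorm_mul _ _
    _ ≤ ‖W‖ * ‖Matrix.diagonal (fun j => Complex.exp ((d j / N : ℝ) * Complex.I) - 1)‖ * ‖Wᴴ‖ := by
        apply mul_le_mul_of_nonneg_right (Matrix.l2_opNorm_mul _ _) (norm_nonneg _)
    _ ≤ ε := by
        rw [norm_unitary hW, Matrix.l2_opNorm_conjTranspose, norm_unitary hW, one_mul, mul_one]
        exact hdiag
end
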